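/- (Scale Invariance of MAPCA, necessity.) Let Σ and M be symmetric positive definite real p×p matrices, let C = diag(c₁,…,c_p) be a diagonal matrix with strictly positive diagonal entries, and let M̃ be a symmetric real p×p matrix. Suppose that for every λ ∈ ℝ and every w ∈ ℝ^p with Σ w = λ M w one has (C Σ C)(C⁻¹ w) = λ · M̃ · (C⁻¹ w). Then M̃ = C M C. -/

import Mathlib

open Matrix

set_option maxHeartbeats 1000000 in
/-- Scale invariance of MAPCA (necessity): if under the positive diagonal rescaling
`C` every generalized eigenpair `(λ, w)` of `(Σ, M)` yields the eigenpair
`(λ, C⁻¹ w)` of `(CΣC, M̃)` for a symmetric matrix `M̃`, then necessarily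
`M̃ = C M C`. -/
theorem mapca_scale_invariance_necessity {p : ℕ}
    (S M : Matrix (Fin p) (Fin p) ℝ) (hS : S.PosDef) (hM : M.PosDef)
    (c : Fin p → ℝ) (hc : ∀ i, 0 < c i) (C : Matrix (Fin p) (Fin p) ℝ)
    (hC : C = Matrix.diagonal c)
    (Mt : Matrix (Fin p) (Fin p) ℝ) (hMt : Mt.IsHermitian)
    (hinv : ∀ (lam : ℝ) (w : Fin p → ℝ), S *ᵥ w = lam • (M *ᵥ w) →
      (C * S * C) *ᵥ (C⁻¹ *ᵥ w) = lam • (Mt *ᵥ (C⁻¹ *ᵥ w))) :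
    Mt = C * M * C := by
  have hCpd : C.PosDef := hC ▸ .diagonal hc
  have hCu : IsUnit C := hCpd.isUnit
  -- square root of M (made opaque)
  obtain ⟨R, hRsd, hRR⟩ : ∃ R : Matrix (Fin p) (Fin p) ℝ, R.PosSemidef ∧ R * R = M :=
    by open MatrixOrder in exact ⟨CFC.sqrt M, nonneg_iff_posSemidef.1 (CFC.sqrt_nonneg M),
      CFC.sqrt_mul_sqrt_self M (nonneg_iff_posSemidef.2 hM.posSemidef)⟩
  have hRu : IsUnit R := by
    have h1 : IsUnit (R * R) := hRR ▸ hM.isUnit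
    have h2 := (isUnit_iff_isUnit_det _).1 h1
    rw [det_mul] at h2
    exact (isUnit_iff_isUnit_det _).2 (isUnit_of_mul_isUnit_left h2)
  have hRiu : IsUnit R⁻¹ := isUnit_nonsing_inv_iff.2 hRu
  have hRiH : (R⁻¹).IsHermitian := hRsd.isHermitian.inv
  have hRRi : R * R⁻¹ = 1 := mul_nonsing_inv _ ((isUnit_iff_isUnit_det _).1 hRu)
  have hCCi : C * C⁻¹ = 1 := mul_nonsing_inv _ ((isUnit_iff_isUnit_det _).1 hCu)
  -- the symmetrized matrix A = R⁻¹ S R⁻¹ is positive definite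
  have hApd : (R⁻¹ * S * R⁻¹).PosDef := by
    refine PosDef.of_dotProduct_mulVec_pos ?_ fun x hx => ?_
    · show (R⁻¹ * S * R⁻¹)ᴴ = R⁻¹ * S * R⁻¹
      rw [conjTranspose_mul, conjTranspose_mul, hRiH.eq, hS.isHermitian.eq, mul_assoc]
    · have hx' : R⁻¹ *ᵥ x ≠ 0 := fun h =>
        hx (mulVec_injective_iff_isUnit.2 hRiu (h.trans (mulVec_zero _).symm))
      have h5 := hS.dotProduct_mulVec_pos hx'
      rw [show R⁻¹ * S * R⁻¹ = (R⁻¹)ᴴ * S * R⁻¹ by rw [hRiH.eq]]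
      simpa only [star_mulVec, dotProduct_mulVec, vecMul_vecMul] using h5
  have hAH : (R⁻¹ * S * R⁻¹).IsHermitian := hApd.isHermitian
  -- key fact, for abstract eigenvectors
  have key : ∀ (lam : ℝ) (v : Fin p → ℝ), 0 < lam → (R⁻¹ * S * R⁻¹) *ᵥ v = lam • v →
      Mt *ᵥ (C⁻¹ *ᵥ (R⁻¹ *ᵥ v)) = (C * M * C) *ᵥ (C⁻¹ *ᵥ (R⁻¹ *ᵥ v)) := by
    intro lam v hlampos hAv
    have hSw : S *ᵥ (R⁻¹ *ᵥ v) = lam • (M *ᵥ (R⁻¹ *ᵥ v)) := by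
      have h1 : R *ᵥ ((R⁻¹ * S * R⁻¹) *ᵥ v) = R *ᵥ (lam • v) := congrArg _ hAv
      rw [mulVec_mulVec, ← Matrix.mul_assoc, ← Matrix.mul_assoc, hRRi, Matrix.one_mul,
        mulVec_smul] at h1
      have h2 : M *ᵥ (R⁻¹ *ᵥ v) = R *ᵥ v := by
        rw [mulVec_mulVec, ← hRR, Matrix.mul_assoc, hRRi, Matrix.mul_one]
      rw [h2, ← h1, mulVec_mulVec]
    have h2 := hinv lam (R⁻¹ *ᵥ v) hSw
    have hSC : C * S * C * C⁻¹ = C * S := by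
      rw [Matrix.mul_assoc (C * S), hCCi, Matrix.mul_one]
    have hMC : C * M * C * C⁻¹ = C * M := by
      rw [Matrix.mul_assoc (C * M), hCCi, Matrix.mul_one]
    have e1 : (C * S * C) *ᵥ (C⁻¹ *ᵥ (R⁻¹ *ᵥ v)) = C *ᵥ (S *ᵥ (R⁻¹ *ᵥ v)) := by
      rw [mulVec_mulVec, hSC, ← mulVec_mulVec]
    have e2 : (C * M * C) *ᵥ (C⁻¹ *ᵥ (R⁻¹ *ᵥ v)) = C *ᵥ (M *ᵥ (R⁻¹ *ᵥ v)) := by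
      rw [mulVec_mulVec, hMC, ← mulVec_mulVec]
    rw [e1, hSw, mulVec_smul, ← e2] at h2
    exact (smul_right_injective (Fin p → ℝ) hlampos.ne' h2).symm
  have key' : ∀ j, ((Mt - C * M * C) * (C⁻¹ * R⁻¹)) *ᵥ ⇑(hAH.eigenvectorBasis j) = 0 := by
    intro j
    have h := key (hAH.eigenvalues j) ⇑(hAH.eigenvectorBasis j) (hApd.eigenvalues_pos j)
      (hAH.mulVec_eigenvectorBasis j)
    have hsplit : ∀ (E : Matrix (Fin p) (Fin p) ℝ) (x : Fin p → ℝ),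
        (E * (C⁻¹ * R⁻¹)) *ᵥ x = E *ᵥ (C⁻¹ *ᵥ (R⁻¹ *ᵥ x)) := by
      intro E x
      rw [← mulVec_mulVec, ← mulVec_mulVec]
    rw [hsplit, sub_mulVec, h, sub_self]
  -- assemble: (Mt - CMC) * (C⁻¹R⁻¹) * V = 0 where V is the eigenvector unitary
  set V : Matrix (Fin p) (Fin p) ℝ := (hAH.eigenvectorUnitary : Matrix (Fin p) (Fin p) ℝ) with hV
  have hEV : (Mt - C * M * C) * (C⁻¹ * R⁻¹) * V = 0 := by
    ext i j
    have h6 := congrFun (key' j) i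
    simpa [hV, Matrix.mul_apply, Matrix.mulVec, dotProduct] using h6
  have hVu : V * star V = 1 := Unitary.mul_star_self_of_mem hAH.eigenvectorUnitary.2
  have hE0 : (Mt - C * M * C) * (C⁻¹ * R⁻¹) = 0 := by
    calc (Mt - C * M * C) * (C⁻¹ * R⁻¹)
        = (Mt - C * M * C) * (C⁻¹ * R⁻¹) * (V * star V) := by
          rw [hVu, Matrix.mul_one]
      _ = ((Mt - C * M * C) * (C⁻¹ * R⁻¹) * V) * star V := (Matrix.mul_assoc _ _ _).symm
      _ = 0 := by rw [hEV, Matrix.zero_mul]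
  have hQu : IsUnit (C⁻¹ * R⁻¹) := (isUnit_nonsing_inv_iff.2 hCu).mul hRiu
  have hfin : Mt - C * M * C = 0 := by
    calc Mt - C * M * C
        = (Mt - C * M * C) * ((C⁻¹ * R⁻¹) * (C⁻¹ * R⁻¹)⁻¹) := by
          rw [mul_nonsing_inv _ ((isUnit_iff_isUnit_det _).1 hQu), Matrix.mul_one]
      _ = ((Mt - C * M * C) * (C⁻¹ * R⁻¹)) * (C⁻¹ * R⁻¹)⁻¹ := (Matrix.mul_assoc _ _ _).symm
      _ = 0 := by rw [hE0, Matrix.zero_mul]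
  exact sub_eq_zero.mp hfin
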